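/- For all n ≥ 0, the Motzkin number m_n equals Σ_{k=0}^{⌊n/2⌋} C_k · binomial(n, 2k), where C_k is the k-th Catalan number. -/

import Mathlib

open Finset

/-- The Motzkin numbers. -/
def motzkin : ℕ → ℕ
  | 0 => 1
  | n + 1 => motzkin n + ∑ i : Fin n, motzkin i * motzkin (n - 1 - i)
decreasing_by
  · exact Nat.lt_succ_self n
  · exact Nat.lt_succ_of_lt i.is_lt
  · have := i.is_lt; omega


private lemma hockey (q : ℕ) : ∀ m : ℕ, ∑ i ∈ range (m + 1), i.choose q = (m + 1).choose (q + 1) := by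
  intro m
  induction m with
  | zero => simp [Nat.choose_succ_succ]
  | succ m ih =>
    rw [sum_range_succ, ih, Nat.choose_succ_succ (m + 1) q]
    ring

private lemma vander (q : ℕ) : ∀ m p : ℕ,
    ∑ i ∈ range (m + 1), i.choose p * (m - i).choose q = (m + 1).choose (p + q + 1) := by
  intro m
  induction m with
  | zero =>
    intro p
    cases p with
    | zero => simp [Nat.choose_succ_succ]
    | succ p =>
      simp [Nat.choose_succ_succ]
      rw [Nat.choose_eq_zero_of_lt (by omega)]
  | succ m ih =>
    intro p
    cases p with
    | zero =>
      simp only [Nat.choose_zero_right, one_mul, zero_add]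
      have h := Finset.sum_range_reflect (fun j => j.choose q) (m + 2)
      calc ∑ i ∈ range (m + 2), (m + 1 - i).choose q
          = ∑ i ∈ range (m + 2), (m + 2 - 1 - i).choose q := by
            apply sum_congr rfl; intro i _; congr 1
        _ = ∑ j ∈ range (m + 2), j.choose q := h
        _ = (m + 2).choose (q + 1) := hockey q (m + 1)
    | succ p =>
      rw [Finset.sum_range_succ']
      have h1 : ∀ i ∈ range (m + 1),
          (i + 1).choose (p + 1) * (m + 1 - (i + 1)).choose q
          = i.choose p * (m - i).choose q + i.choose (p + 1) * (m - i).choose q := by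
        intro i _
        have h2 : m + 1 - (i + 1) = m - i := by omega
        rw [h2, Nat.choose_succ_succ i p, add_mul]
      rw [Finset.sum_congr rfl h1, Finset.sum_add_distrib, ih p, ih (p + 1)]
      have h3 : p + 1 + q + 1 = (p + q + 1) + 1 := by ring
      rw [h3, Nat.choose_succ_succ (m + 1) (p + q + 1), Nat.choose_zero_succ p]
      ring

/-- The extended sum. -/
private def G (n : ℕ) : ℕ := ∑ k ∈ range (n + 1), catalan k * n.choose (2 * k)

private lemma catalan_succ_range (k : ℕ) :
    catalan (k + 1) = ∑ a ∈ range (k + 1), catalan a * catalan (k - a) := by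
  rw [catalan_succ k]
  exact Fin.sum_univ_eq_sum_range (fun j => catalan j * catalan (k - j)) (k + 1)

private lemma key2 (m : ℕ) :
    ∑ k ∈ range (m + 2), catalan (k + 1) * (m + 1).choose (2 * k + 1)
      = ∑ i ∈ range (m + 1), G i * G (m - i) := by
  have lhs_eq : ∑ k ∈ range (m + 2), catalan (k + 1) * (m + 1).choose (2 * k + 1)
      = ∑ a ∈ range (m + 2), ∑ b ∈ range (m + 2),
          catalan a * catalan b * (m + 1).choose (2 * (a + b) + 1) := by
    calc ∑ k ∈ range (m + 2), catalan (k + 1) * (m + 1).choose (2 * k + 1)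
        = ∑ k ∈ range (m + 2), ∑ a ∈ range (k + 1),
            catalan a * catalan (k - a) * (m + 1).choose (2 * (a + (k - a)) + 1) := by
          apply sum_congr rfl; intro k _
          rw [catalan_succ_range, Finset.sum_mul]
          apply sum_congr rfl; intro a ha
          rw [mem_range] at ha
          have : a + (k - a) = k := by omega
          rw [this]
      _ = ∑ a ∈ range (m + 2), ∑ b ∈ range (m + 2 - a),
            catalan a * catalan b * (m + 1).choose (2 * (a + b) + 1) :=
          sum_range_diag_flip (m + 2) (fun a b => catalan a * catalan b * (m + 1).choose (2 * (a + b) + 1))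
      _ = _ := by
          apply sum_congr rfl; intro a ha
          rw [mem_range] at ha
          apply Finset.sum_subset (by rw [range_subset_range]; omega)
          intro b hb hnb
          rw [mem_range] at hb hnb
          rw [Nat.choose_eq_zero_of_lt (by omega), mul_zero]
  have rhs_eq : ∑ i ∈ range (m + 1), G i * G (m - i)
      = ∑ a ∈ range (m + 2), ∑ b ∈ range (m + 2),
          catalan a * catalan b * (m + 1).choose (2 * (a + b) + 1) := by
    calc ∑ i ∈ range (m + 1), G i * G (m - i)
        = ∑ i ∈ range (m + 1), (∑ a ∈ range (m + 2), catalan a * i.choose (2 * a))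
            * (∑ b ∈ range (m + 2), catalan b * (m - i).choose (2 * b)) := by
          apply sum_congr rfl; intro i hi
          rw [mem_range] at hi
          unfold G
          congr 1
          · apply Finset.sum_subset (by rw [range_subset_range]; omega)
            intro a _ hna
            rw [mem_range, not_lt] at hna
            rw [Nat.choose_eq_zero_of_lt (by omega), mul_zero]
          · apply Finset.sum_subset (by rw [range_subset_range]; omega)
            intro b _ hnb
            rw [mem_range, not_lt] at hnb
            rw [Nat.choose_eq_zero_of_lt (by omega), mul_zero]
      _ = ∑ i ∈ range (m + 1), ∑ a ∈ range (m + 2), ∑ b ∈ range (m + 2),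
            (catalan a * i.choose (2 * a)) * (catalan b * (m - i).choose (2 * b)) := by
          apply sum_congr rfl; intro i _
          rw [Finset.sum_mul_sum]
      _ = ∑ a ∈ range (m + 2), ∑ b ∈ range (m + 2), ∑ i ∈ range (m + 1),
            (catalan a * i.choose (2 * a)) * (catalan b * (m - i).choose (2 * b)) := by
          rw [Finset.sum_comm]
          apply sum_congr rfl; intro a _
          rw [Finset.sum_comm]
      _ = _ := by
          apply sum_congr rfl; intro a _
          apply sum_congr rfl; intro b _
          calc ∑ i ∈ range (m + 1), (catalan a * i.choose (2 * a)) * (catalan b * (m - i).choose (2 * b))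
              = catalan a * catalan b * ∑ i ∈ range (m + 1), i.choose (2 * a) * (m - i).choose (2 * b) := by
                rw [Finset.mul_sum]
                apply sum_congr rfl; intro i _; ring
            _ = catalan a * catalan b * (m + 1).choose (2 * a + 2 * b + 1) := by
                rw [vander (2 * b) m (2 * a)]
            _ = _ := by
                congr 2
                ring
  rw [lhs_eq, rhs_eq]

private lemma G_rec (n : ℕ) : G (n + 1) = G n + ∑ i ∈ range n, G i * G (n - 1 - i) := by
  cases n with
  | zero => simp [G, Finset.sum_range_succ, catalan_one]
  | succ m =>
    have hsplit : G (m + 2)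
        = (1 + ∑ k ∈ range (m + 2), catalan (k + 1) * (m + 1).choose (2 * k + 2))
          + ∑ k ∈ range (m + 2), catalan (k + 1) * (m + 1).choose (2 * k + 1) := by
      unfold G
      rw [Finset.sum_range_succ']
      have h1 : ∀ k ∈ range (m + 2),
          catalan (k + 1) * (m + 2).choose (2 * (k + 1))
          = catalan (k + 1) * (m + 1).choose (2 * k + 1)
            + catalan (k + 1) * (m + 1).choose (2 * k + 2) := by
        intro k _
        have h2 : 2 * (k + 1) = (2 * k + 1) + 1 := by ring
        rw [h2, Nat.choose_succ_succ (m + 1) (2 * k + 1), mul_add]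
      rw [Finset.sum_congr rfl h1, Finset.sum_add_distrib]
      simp [catalan_zero]
      ring
    have hpart1 : 1 + ∑ k ∈ range (m + 2), catalan (k + 1) * (m + 1).choose (2 * k + 2)
        = G (m + 1) := by
      have e1 : ∑ k ∈ range (m + 3), catalan k * (m + 1).choose (2 * k)
          = 1 + ∑ k ∈ range (m + 2), catalan (k + 1) * (m + 1).choose (2 * k + 2) := by
        rw [Finset.sum_range_succ']
        simp [catalan_zero, Nat.mul_succ]
        ring
      have e2 : ∑ k ∈ range (m + 3), catalan k * (m + 1).choose (2 * k)
          = G (m + 1) := by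
        unfold G
        rw [Finset.sum_range_succ (fun k => catalan k * (m + 1).choose (2 * k)) (m + 2)]
        rw [Nat.choose_eq_zero_of_lt (by omega), mul_zero, add_zero]
      rw [← e1, e2]
    rw [hsplit, hpart1, key2 m]
    have : ∀ i : ℕ, m + 1 - 1 - i = m - i := fun i => by omega
    simp only [this]

private lemma motzkin_eq_G : ∀ n, motzkin n = G n := by
  intro n
  induction n using Nat.strong_induction_on with
  | _ n ih =>
    match n with
    | 0 => simp [motzkin, G]
    | Nat.succ n =>
      rw [motzkin, Fin.sum_univ_eq_sum_range (fun i => motzkin i * motzkin (n - 1 - i)) n,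
        G_rec, ih n (Nat.lt_succ_self n)]
      congr 1
      apply sum_congr rfl
      intro i hi
      rw [mem_range] at hi
      rw [ih i (by omega), ih (n - 1 - i) (by omega)]

/-- For all `n ≥ 0`, `m n = ∑_{k=0}^{⌊n/2⌋} C_k ⬝ (n choose 2k)`. -/
theorem motzkin_eq_sum_catalan_choose (n : ℕ) :
    motzkin n = ∑ k ∈ Finset.range (n / 2 + 1), catalan k * n.choose (2 * k) := by
  have h : ∑ k ∈ Finset.range (n / 2 + 1), catalan k * n.choose (2 * k) = G n := by
    unfold G
    apply Finset.sum_subset (by rw [range_subset_range]; omega)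
    intro k _ hk
    rw [mem_range, not_lt] at hk
    rw [Nat.choose_eq_zero_of_lt (by omega), mul_zero]
  rw [h]
  exact motzkin_eq_G n
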